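/- There is a bijection between overpartitions with exactly n nonnegative parts and pairs (α, β), where α is a partition with distinct parts drawn from {0, 1, ..., n−1} (possibly empty) and β is a partition with exactly n nonnegative parts. Moreover, under this bijection, the number of parts of α equals the number of overlined parts of the overpartition, and |α| + |β| equals the size of the overpartition. -/

import Mathlib

open Finset

/-- An overpartition with exactly `n` nonnegative parts: a weakly decreasing sequence of
`n` nonnegative integers in which a part may be overlined only if it is the first
occurrence of its value. -/
structure Overpartition (n : ℕ) where
  part : Fin n → ℕ
  overlined : Fin n → Bool
  antitone : ∀ a b : Fin n, a ≤ b → part b ≤ part a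
  firstOcc : ∀ a : Fin n, overlined a = true → ∀ b : Fin n, b < a → part b ≠ part a

namespace JSaux

variable {n : ℕ}

/-- number of elements of `S` strictly above `a` -/
def nov (S : Finset (Fin n)) (a : Fin n) : ℕ := (S.filter (fun m => a < m)).card

lemma nov_anti (S : Finset (Fin n)) {a b : Fin n} (h : a ≤ b) : nov S b ≤ nov S a := by
  apply card_le_card
  apply monotone_filter_right
  intro m _ hm
  exact lt_of_le_of_lt h hm

lemma nov_lt_of_mem {S : Finset (Fin n)} {a b : Fin n} (ha : a ∈ S) (h : b < a) :
    nov S a < nov S b := by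
  apply card_lt_card
  constructor
  · apply monotone_filter_right
    intro m _ hm
    exact lt_trans h hm
  · intro hsub
    have : a ∈ S.filter (fun m => b < m) := mem_filter.2 ⟨ha, h⟩
    have := hsub this
    simp at this

lemma nov_split (S : Finset (Fin n)) {a b : Fin n} (hab : (b : ℕ) = a + 1) :
    nov S a = nov S b + (if b ∈ S then 1 else 0) := by
  unfold nov
  have hfe : S.filter (fun m => a < m) =
      S.filter (fun m => b < m) ∪ S.filter (fun m => m = b) := by
    rw [← filter_or]
    apply filter_congr
    intro m _
    constructor
    · intro h
      rcases lt_or_eq_of_le (show b ≤ m by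
        have : (a : ℕ) < (m : ℕ) := h
        have : (b : ℕ) ≤ (m : ℕ) := by omega
        exact this) with h' | h'
      · exact Or.inl h'
      · exact Or.inr h'.symm
    · intro h
      rcases h with h | h
      · have : (b : ℕ) < (m : ℕ) := h
        have : (a : ℕ) < (m : ℕ) := by omega
        exact this
      · subst h
        have : (a : ℕ) < (m : ℕ) := by omega
        exact this
  rw [hfe, card_union_of_disjoint, filter_eq']
  · split <;> simp
  · rw [disjoint_filter]
    intro x _ hx heq
    subst heq
    exact lt_irrefl x hx

lemma chain (lam : Overpartition n) (k : ℕ) :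
    ∀ a b : Fin n, (b : ℕ) = (a : ℕ) + k →
      lam.part b + nov (univ.filter fun m => lam.overlined m = true) a ≤
      lam.part a + nov (univ.filter fun m => lam.overlined m = true) b := by
  induction k with
  | zero =>
    intro a b hab
    have : a = b := Fin.ext (by omega)
    subst this
    exact le_refl _
  | succ k ih =>
    intro a b hab
    have hck : (a : ℕ) + k < n := by have := b.isLt; omega
    set c : Fin n := ⟨(a : ℕ) + k, hck⟩ with hc
    have h1 := ih a c rfl
    -- step from c to b
    have hcb : (b : ℕ) = (c : ℕ) + 1 := by simp [hc]; omega
    have hcltb : c < b := by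
      show (c : ℕ) < (b : ℕ)
      omega
    have hsplit := nov_split (univ.filter fun m => lam.overlined m = true) hcb
    have hple : lam.part b ≤ lam.part c := lam.antitone c b (le_of_lt hcltb)
    by_cases hov : lam.overlined b = true
    · have hbmem : b ∈ univ.filter fun m => lam.overlined m = true := by
        simp [hov]
      have hne : lam.part c ≠ lam.part b := lam.firstOcc b hov c hcltb
      have : lam.part b < lam.part c := lt_of_le_of_ne hple (Ne.symm hne)
      rw [if_pos hbmem] at hsplit
      omega
    · have hbmem : b ∉ univ.filter fun m => lam.overlined m = true := by
        simp [hov]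
      rw [if_neg hbmem] at hsplit
      omega

lemma chain' (lam : Overpartition n) {a b : Fin n} (h : a ≤ b) :
    lam.part b + nov (univ.filter fun m => lam.overlined m = true) a ≤
    lam.part a + nov (univ.filter fun m => lam.overlined m = true) b := by
  have hab : (b : ℕ) = (a : ℕ) + ((b : ℕ) - (a : ℕ)) := by
    have : (a : ℕ) ≤ (b : ℕ) := h
    omega
  exact chain lam _ a b hab

lemma nov_le_part (lam : Overpartition n) (a : Fin n) :
    nov (univ.filter fun m => lam.overlined m = true) a ≤ lam.part a := by
  have hn : 0 < n := a.pos
  set b : Fin n := ⟨n - 1, by omega⟩ with hb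
  have hab : a ≤ b := by
    show (a : ℕ) ≤ (b : ℕ)
    have := a.isLt
    simp [hb]; omega
  have hnovb : nov (univ.filter fun m => lam.overlined m = true) b = 0 := by
    unfold nov
    rw [card_eq_zero, filter_eq_empty_iff]
    intro m _
    have := m.isLt
    show ¬ b < m
    intro h
    have : (b : ℕ) < (m : ℕ) := h
    simp [hb] at this
    omega
  have := chain' lam hab
  omega

lemma sum_nov (S : Finset (Fin n)) :
    ∑ a : Fin n, nov S a = ∑ m ∈ S, (m : ℕ) := by
  unfold nov
  have : ∀ a : Fin n, (S.filter (fun m => a < m)).card = ∑ m ∈ S, (if a < m then 1 else 0) := by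
    intro a
    rw [Finset.card_filter]
  simp_rw [this]
  rw [Finset.sum_comm]
  apply Finset.sum_congr rfl
  intro m _
  have : ∑ a : Fin n, (if a < m then 1 else 0) = (univ.filter (fun a : Fin n => a < m)).card := by
    rw [Finset.card_filter]
  rw [this]
  have : univ.filter (fun a : Fin n => a < m) = Finset.Iio m := by
    ext x
    simp
  rw [this, Fin.card_Iio]

end JSaux

open JSaux in
/-- Joichi–Stanton: overpartitions with `n` nonnegative parts are in bijection with
pairs `(α, β)` where `α` is a partition with distinct parts from `{0, 1, …, n-1}`
(a `Finset (Fin n)`, possibly empty) and `β` is a partition with `n` nonnegative parts.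
Moreover the number of parts of `α` equals the number of overlined parts, and
`|α| + |β|` equals the size of the overpartition. -/
theorem joichi_stanton (n : ℕ) :
    ∃ e : Overpartition n ≃
        (Finset (Fin n)) × {β : Fin n → ℕ // ∀ a b : Fin n, a ≤ b → β b ≤ β a},
      ∀ lam : Overpartition n,
        (e lam).1.card = (Finset.univ.filter (fun a : Fin n => lam.overlined a = true)).card ∧
        (∑ x ∈ (e lam).1, (x : ℕ)) + (∑ a, (e lam).2.1 a) = ∑ a, lam.part a := by
  refine ⟨⟨
    fun lam => ⟨univ.filter (fun m => lam.overlined m = true),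
      ⟨fun a => lam.part a - nov (univ.filter fun m => lam.overlined m = true) a, ?_⟩⟩,
    fun p => ⟨fun a => p.2.1 a + nov p.1 a, fun a => decide (a ∈ p.1), ?_, ?_⟩,
    ?_, ?_⟩, ?_⟩
  · -- β antitone
    intro a b hab
    dsimp only
    have h1 := chain' lam hab
    have h2 := nov_le_part lam a
    have h3 := nov_le_part lam b
    omega
  · -- constructed part antitone
    intro a b hab
    exact Nat.add_le_add (p.2.2 a b hab) (nov_anti _ hab)
  · -- constructed firstOcc
    intro a ha b hba
    have haS : a ∈ _ := of_decide_eq_true ha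
    have h1 : nov _ a < nov _ b := nov_lt_of_mem haS hba
    intro heq
    have h2 := p.2.2 b a (le_of_lt hba)
    omega
  · -- left inverse
    intro lam
    cases lam with
    | mk p o h1 h2 =>
      simp only
      congr 1
      · funext a
        have := nov_le_part ⟨p, o, h1, h2⟩ a
        simp only at this ⊢
        omega
      · funext a
        rcases h : o a with _ | _ <;> simp [h]
  · -- right inverse
    intro p
    rcases p with ⟨S, β, hβ⟩
    have hS : (univ.filter fun m => decide (m ∈ S) = true) = S := by
      simp [Finset.filter_univ_mem]
    refine Prod.ext ?_ ?_
    · simp only [Finset.filter_congr_decidable]; exact hS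
    · apply Subtype.ext
      funext a
      simp only [hS]
      omega
  · -- properties
    intro lam
    refine ⟨rfl, ?_⟩
    show (∑ x ∈ univ.filter (fun m => lam.overlined m = true), (x : ℕ)) +
      (∑ a : Fin n, (lam.part a - nov (univ.filter fun m => lam.overlined m = true) a)) =
      ∑ a : Fin n, lam.part a
    rw [← sum_nov (univ.filter fun m => lam.overlined m = true)]
    rw [← Finset.sum_add_distrib]
    apply Finset.sum_congr rfl
    intro a _
    have := nov_le_part lam a
    omega
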